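/- Let G be a graph, let t ≥ 1, and let s be a simplicial vertex of G with deg_G(s) < t − 1. Then G contains the complete graph K_t as a minor if and only if G − s (the graph obtained from G by deleting s) contains K_t as a minor. -/

import Mathlib

open SimpleGraph

universe u v

/-- `H` is a minor of `G`: there is a minor model assigning to each vertex of `H`
a nonempty branch set in `G`, pairwise disjoint, each inducing a connected subgraph,
with an edge of `G` between the branch sets of any two adjacent vertices of `H`. -/
def HasMinor {V : Type u} {W : Type v} (G : SimpleGraph V) (H : SimpleGraph W) : Prop :=
  ∃ φ : W → Set V,
    (∀ w, (φ w).Nonempty) ∧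
    (Pairwise fun w w' => Disjoint (φ w) (φ w')) ∧
    (∀ w, (G.induce (φ w)).Connected) ∧
    ∀ ⦃w w'⦄, H.Adj w w' → ∃ a ∈ φ w, ∃ b ∈ φ w', G.Adj a b

/-- `s` is a simplicial vertex of `G`: its open neighborhood induces a clique. -/
def IsSimplicial {V : Type*} (G : SimpleGraph V) (s : V) : Prop :=
  ∀ ⦃a b : V⦄, G.Adj s a → G.Adj s b → a ≠ b → G.Adj a b

noncomputable def induceInduceIso {V : Type u} (G : SimpleGraph V) (S : Set V) (T : Set S) :
    ((G.induce S).induce T) ≃g (G.induce (Subtype.val '' T)) := by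
  refine ⟨Equiv.Set.image Subtype.val T Subtype.val_injective, ?_⟩
  intro a b
  simp [Equiv.Set.image, Equiv.Set.imageOfInjOn, comap_adj]

lemma reach_del {V : Type u} {G : SimpleGraph V} {s : V} (hs : IsSimplicial G s) {S : Set V} :
    ∀ (n : ℕ) (a b : S) (ha : (a : V) ≠ s) (hb : (b : V) ≠ s)
      (p : (G.induce S).Walk a b), p.length = n →
      (G.induce (S \ {s})).Reachable ⟨a, a.2, ha⟩ ⟨b, b.2, hb⟩ := by
  intro n
  induction n using Nat.strong_induction_on with
  | _ n IH =>
    intro a b ha hb p hn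
    cases p with
    | nil =>
      exact Reachable.refl _
    | @cons _ c _ h q =>
      simp only [SimpleGraph.Walk.length_cons] at hn
      by_cases hc : (c : V) = s
      · cases q with
        | nil => exact absurd hc hb
        | @cons _ d _ h2 r =>
          simp only [SimpleGraph.Walk.length_cons] at hn
          have hGad : G.Adj (a : V) (c : V) := h
          have hGcd : G.Adj (c : V) (d : V) := h2
          rw [hc] at hGad hGcd
          have hd : (d : V) ≠ s := fun hds => by
            exact G.irrefl (hds ▸ hGcd)
          by_cases had : (a : V) = (d : V)
          · have : a = d := Subtype.ext had
            subst this
            exact IH r.length (by omega) a b ha hb r rfl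
          · have hadj : G.Adj (a : V) (d : V) := hs (G.adj_symm hGad) hGcd had
            have step : (G.induce (S \ {s})).Adj ⟨a, a.2, ha⟩ ⟨d, d.2, hd⟩ := hadj
            exact (step.reachable).trans (IH r.length (by omega) d b hd hb r rfl)
      · have hGac : G.Adj (a : V) (c : V) := h
        have step : (G.induce (S \ {s})).Adj ⟨a, a.2, ha⟩ ⟨c, c.2, hc⟩ := hGac
        exact (step.reachable).trans (IH q.length (by omega) c b hc hb q rfl)

lemma hasMinor_induce_of {V : Type u} {W : Type v} (G : SimpleGraph V) (H : SimpleGraph W)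
    (U : Set V) (φ : W → Set V) (hsub : ∀ w, φ w ⊆ U)
    (h1 : ∀ w, (φ w).Nonempty)
    (h2 : Pairwise fun w w' => Disjoint (φ w) (φ w'))
    (h3 : ∀ w, (G.induce (φ w)).Connected)
    (h4 : ∀ ⦃w w'⦄, H.Adj w w' → ∃ a ∈ φ w, ∃ b ∈ φ w', G.Adj a b) :
    HasMinor (G.induce U) H := by
  refine ⟨fun w => Subtype.val ⁻¹' φ w, ?_, ?_, ?_, ?_⟩
  · intro w
    obtain ⟨x, hx⟩ := h1 w
    exact ⟨⟨x, hsub w hx⟩, hx⟩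
  · intro w w' hww
    rw [Set.disjoint_left]
    rintro ⟨x, hxU⟩ hx hx'
    exact Set.disjoint_left.mp (h2 hww) hx hx'
  · intro w
    have himg : Subtype.val '' (Subtype.val ⁻¹' φ w : Set U) = φ w := by
      rw [Subtype.image_preimage_coe]
      exact Set.inter_eq_self_of_subset_right (hsub w)
    have := (induceInduceIso G U (Subtype.val ⁻¹' φ w)).connected_iff
    rw [himg] at this
    exact this.mpr (h3 w)
  · intro w w' hww
    obtain ⟨a, ha, b, hb, hab⟩ := h4 hww
    exact ⟨⟨a, hsub w ha⟩, ha, ⟨b, hsub w' hb⟩, hb, hab⟩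

lemma hasMinor_of_induce {V : Type u} {W : Type v} {G : SimpleGraph V} {H : SimpleGraph W}
    {U : Set V} (h : HasMinor (G.induce U) H) : HasMinor G H := by
  obtain ⟨ψ, h1, h2, h3, h4⟩ := h
  refine ⟨fun w => Subtype.val '' ψ w, ?_, ?_, ?_, ?_⟩
  · intro w; exact (h1 w).image _
  · intro w w' hww
    exact (Set.disjoint_image_iff Subtype.val_injective).mpr (h2 hww)
  · intro w
    exact (induceInduceIso G U (ψ w)).connected_iff.mp (h3 w)
  · intro w w' hww
    obtain ⟨a, ha, b, hb, hab⟩ := h4 hww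
    exact ⟨a, ⟨a, ha, rfl⟩, b, ⟨b, hb, rfl⟩, hab⟩

lemma neighbor_in_set {V : Type u} {G : SimpleGraph V} {S : Set V} {s x : V}
    (hsS : s ∈ S) (hxS : x ∈ S) (hxs : x ≠ s) (hc : (G.induce S).Connected) :
    ∃ c ∈ S, c ≠ s ∧ G.Adj s c := by
  obtain ⟨p⟩ := hc.preconnected ⟨s, hsS⟩ ⟨x, hxS⟩
  cases p with
  | nil => exact absurd rfl hxs.symm
  | @cons _ c _ h q =>
    have hGsc : G.Adj s (c : V) := h
    exact ⟨c, c.2, fun hcs => G.irrefl (hcs ▸ hGsc), hGsc⟩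

/-- If `s` is a simplicial vertex of `G` with `deg(s) < t - 1` (where `t ≥ 1`), then
`G` has a `K_t` minor iff the graph `G - s` obtained by deleting `s` does. -/
theorem stmt13 {V : Type u} [Fintype V] (G : SimpleGraph V) (t : ℕ) (ht : 1 ≤ t)
    (s : V) (hsimp : IsSimplicial G s)
    (hdeg : (G.neighborSet s).ncard < t - 1) :
    HasMinor G (⊤ : SimpleGraph (Fin t)) ↔
      HasMinor (G.induce {x : V | x ≠ s}) (⊤ : SimpleGraph (Fin t)) := by
  constructor
  · rintro ⟨φ, h1, h2, h3, h4⟩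
    by_cases hsin : ∃ w, s ∈ φ w
    · obtain ⟨w₀, hw₀⟩ := hsin
      by_cases hsing : ∃ a ∈ φ w₀, a ≠ s
      · -- delete s from its branch set
        obtain ⟨a₀, ha₀, ha₀s⟩ := hsing
        -- every branch set has an element ≠ s
        have hane : ∀ w, ∃ a ∈ φ w, a ≠ s := by
          intro w
          by_cases hw : w = w₀
          · exact hw ▸ ⟨a₀, ha₀, ha₀s⟩
          · obtain ⟨x, hx⟩ := h1 w
            refine ⟨x, hx, fun hxs => ?_⟩
            exact Set.disjoint_left.mp (h2 hw) hx (hxs ▸ hw₀)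
        refine hasMinor_induce_of G _ _ (fun w => φ w \ {s}) ?_ ?_ ?_ ?_ ?_
        · intro w x hx; exact hx.2
        · intro w
          obtain ⟨a, ha, has⟩ := hane w
          exact ⟨a, ha, has⟩
        · intro w w' hww
          exact (h2 hww).mono Set.diff_subset Set.diff_subset
        · intro w
          by_cases hsw : s ∈ φ w
          · rw [connected_iff]
            constructor
            · rintro ⟨u, huw, hus⟩ ⟨v, hvw, hvs⟩
              obtain ⟨p⟩ := (h3 w).preconnected ⟨u, huw⟩ ⟨v, hvw⟩
              exact reach_del hsimp p.length ⟨u, huw⟩ ⟨v, hvw⟩ hus hvs p rfl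
            · obtain ⟨a, ha, has⟩ := hane w
              exact ⟨⟨a, ha, has⟩⟩
          · have heq : φ w \ {s} = φ w := Set.diff_singleton_eq_self hsw
            show (G.induce (φ w \ {s})).Connected
            rw [heq]; exact h3 w
        · intro w w' hww
          obtain ⟨a, ha, b, hb, hab⟩ := h4 hww
          by_cases has : a = s
          · have hsw : s ∈ φ w := has ▸ ha
            have hab : G.Adj s b := has ▸ hab
            obtain ⟨x, hx, hxs⟩ := hane w
            obtain ⟨c, hc, hcs, hac⟩ := neighbor_in_set hsw hx hxs (h3 w)
            have hbs : b ≠ s := fun hbs => G.irrefl (hbs ▸ hab)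
            have hcb : c ≠ b := fun hcb =>
              Set.disjoint_left.mp (h2 (Ne.intro (by simpa using hww))) hc (hcb ▸ hb)
            exact ⟨c, ⟨hc, hcs⟩, b, ⟨hb, hbs⟩, hsimp hac hab hcb⟩
          · by_cases hbs : b = s
            · have hsw' : s ∈ φ w' := hbs ▸ hb
              have hab : G.Adj a s := hbs ▸ hab
              obtain ⟨x, hx, hxs⟩ := hane w'
              obtain ⟨c, hc, hcs, hbc⟩ := neighbor_in_set hsw' hx hxs (h3 w')
              have hac : a ≠ c := fun hac =>
                Set.disjoint_left.mp (h2 (Ne.intro (by simpa using hww))) ha (hac ▸ hc)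
              exact ⟨a, ⟨ha, has⟩, c, ⟨hc, hcs⟩, hsimp (G.adj_symm hab) hbc hac⟩
            · exact ⟨a, ⟨ha, has⟩, b, ⟨hb, hbs⟩, hab⟩
      · -- φ w₀ = {s}: degree contradiction
        exfalso
        push_neg at hsing
        have hchoice : ∀ w : {w : Fin t // w ≠ w₀}, ∃ a, a ∈ G.neighborSet s ∧ a ∈ φ w.1 := by
          rintro ⟨w, hw⟩
          have : (⊤ : SimpleGraph (Fin t)).Adj w w₀ := by simpa using hw
          obtain ⟨a, ha, b, hb, hab⟩ := h4 this
          have hbs : b = s := hsing b hb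
          subst hbs
          exact ⟨a, G.adj_symm hab, ha⟩
        choose f hf1 hf2 using hchoice
        have hinj : Function.Injective f := by
          rintro ⟨w, hw⟩ ⟨w', hw'⟩ hff
          by_contra hne
          have hwne : w ≠ w' := fun h => hne (by simp [h])
          exact Set.disjoint_left.mp (h2 hwne) (hf2 ⟨w, hw⟩) (hff ▸ hf2 ⟨w', hw'⟩)
        have hcard : t - 1 ≤ (G.neighborSet s).ncard := by
          have := Nat.card_le_card_of_injective
            (fun w => (⟨f w, hf1 w⟩ : G.neighborSet s)) (fun x y hxy => hinj (by
              simpa using congrArg Subtype.val hxy))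
          rw [Nat.card_coe_set_eq] at this
          calc t - 1 = Nat.card {w : Fin t // w ≠ w₀} := by
                rw [Nat.card_eq_fintype_card, Fintype.card_subtype_compl,
                  Fintype.card_subtype_eq, Fintype.card_fin]
            _ ≤ (G.neighborSet s).ncard := this
        omega
    · -- s in no branch set
      push_neg at hsin
      refine hasMinor_induce_of G _ _ φ ?_ h1 h2 h3 h4
      intro w x hx hxs
      exact hsin w ((hxs : x = s) ▸ hx)
  · exact hasMinor_of_induce
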